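/- Let m ≡ 0 (mod 4) with m ≥ 4, n = 2^m − 1, and a = 2^{(m+2)/2} − 1. Then for every integer k with 1 ≤ k ≤ 2^{(m−2)/2} or with 2^m − 2^{(m−2)/2} − 1 ≤ k ≤ 2^m − 2, the residue a·k mod n lies in T_{(1,m)}. -/

import Mathlib

open Polynomial

noncomputable def wt2 (a : ℕ) : ℕ := (Nat.digits 2 a).sum

noncomputable def ell (m i : ℕ) : ℕ :=
  sInf {l : ℕ | 0 < l ∧ i * 2 ^ l % (2 ^ m - 1) = i % (2 ^ m - 1)}

noncomputable def coset (m i : ℕ) : Finset ℕ :=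
  (Finset.range (ell m i)).image (fun j => i * 2 ^ j % (2 ^ m - 1))

noncomputable def rho (m i : ℕ) : ℕ := ((coset m i).filter (fun x => x % 2 = 0)).card

noncomputable def vv (m i : ℕ) : ℕ := m * rho m i / ell m i % 2

noncomputable def Tset (m j : ℕ) : Finset ℕ :=
  (Finset.range (2 ^ m - 1)).filter (fun i => vv m i = j)

noncomputable def Nset (m j : ℕ) : Finset ℕ :=
  (Finset.range (2 ^ m - 1)).filter (fun a => a ≠ 0 ∧ wt2 a % 2 = j)

noncomputable def epsilon (h a : ℕ) : ℕ :=
  if a = 2 ^ h - 1 then 1 else sInf {t : ℕ | 2 ^ h - 1 ≤ 2 ^ t * a}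

noncomputable def kappa (h a : ℕ) : ℕ := epsilon h a % 2

noncomputable def leader (m i : ℕ) : ℕ := sInf {x : ℕ | x ∈ coset m i}

noncomputable def uu (m h i : ℕ) : ℕ :=
  if leader m i = 1 then (vv m 1 + h + 1) % 2
  else if leader m i % 2 = 1 ∧ leader m i ≤ 2 ^ h - 1 then
    (kappa h (leader m i) + vv m (leader m i)) % 2
  else vv m (leader m i)

noncomputable def Dset (m h j : ℕ) : Finset ℕ :=
  (Finset.range (2 ^ m - 1)).filter (fun i => uu m h i = j)

noncomputable def cyclicCode (m : ℕ) (α : GaloisField 2 m) (T : Set ℕ) :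
    Submodule (ZMod 2) (Polynomial (ZMod 2)) :=
  Polynomial.degreeLT (ZMod 2) (2 ^ m - 1) ⊓
    ⨅ j ∈ T, LinearMap.ker (Polynomial.aeval (α ^ j)).toLinearMap

def minDistGE (C : Submodule (ZMod 2) (Polynomial (ZMod 2))) (d : ℕ) : Prop :=
  ∀ c ∈ C, c ≠ 0 → d ≤ c.support.card


/- ## Auxiliary lemmas -/

section Aux

open Finset

lemma wt2_step' (x : ℕ) : wt2 x = x % 2 + wt2 (x / 2) := by
  rcases Nat.eq_zero_or_pos x with h | h
  · simp [h, wt2]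
  · unfold wt2; rw [Nat.digits_def' (by norm_num) h]; simp

lemma wt2_two_mul_add (x b : ℕ) (hb : b < 2) : wt2 (2 * x + b) = b + wt2 x := by
  rw [wt2_step' (2 * x + b)]
  have h1 : (2 * x + b) % 2 = b := by omega
  have h2 : (2 * x + b) / 2 = x := by omega
  rw [h1, h2]

lemma wt2_le (t : ℕ) : ∀ x, x < 2 ^ t → wt2 x ≤ t := by
  induction t with
  | zero => intro x hx; interval_cases x; simp [wt2]
  | succ t ih =>
    intro x hx
    rw [wt2_step' x]
    have := ih (x / 2) (by omega)
    omega

lemma wt2_split (t : ℕ) : ∀ q r, r < 2 ^ t → wt2 (q * 2 ^ t + r) = wt2 q + wt2 r := by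
  induction t with
  | zero => intro q r hr; interval_cases r; simp [wt2]
  | succ t ih =>
    intro q r hr
    have he : q * 2 ^ (t + 1) + r = 2 * (q * 2 ^ t + r / 2) + r % 2 := by
      have := Nat.div_add_mod r 2; ring_nf; omega
    rw [he, wt2_two_mul_add _ _ (Nat.mod_lt _ (by norm_num)),
      ih q (r / 2) (by omega), wt2_step' r]
    omega

lemma wt2_compl (t : ℕ) : ∀ x, x < 2 ^ t → wt2 (2 ^ t - 1 - x) = t - wt2 x := by
  induction t with
  | zero => intro x hx; interval_cases x; simp [wt2]
  | succ t ih =>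
    intro x hx
    have he : 2 ^ (t + 1) - 1 - x = 2 * (2 ^ t - 1 - x / 2) + (1 - x % 2) := by
      have := Nat.div_add_mod x 2
      have h1 : x / 2 < 2 ^ t := by omega
      have h2 : 0 < 2 ^ t := Nat.two_pow_pos t
      ring_nf; omega
    rw [he, wt2_two_mul_add _ _ (by omega), ih (x / 2) (by omega), wt2_step' x]
    have := wt2_le t (x / 2) (by omega)
    omega

lemma wt2_pred_pow_mul (t k : ℕ) (h1 : 1 ≤ k) (h2 : k ≤ 2 ^ t) :
    wt2 ((2 ^ t - 1) * k) = t := by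
  have h2t : 1 ≤ 2 ^ t := Nat.one_le_two_pow
  have e1 : (k - 1) * 2 ^ t + 2 ^ t = k * 2 ^ t := by
    have : (k - 1) * 2 ^ t + 2 ^ t = ((k - 1) + 1) * 2 ^ t := by ring
    rw [this]; congr 1; omega
  have e2 : (2 ^ t - 1) * k + k = k * 2 ^ t := by
    have : (2 ^ t - 1) * k + k = ((2 ^ t - 1) + 1) * k := by ring
    rw [this]
    have : (2 ^ t - 1) + 1 = 2 ^ t := by omega
    rw [this, mul_comm]
  have hsplit : (2 ^ t - 1) * k = (k - 1) * 2 ^ t + (2 ^ t - k) := by omega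
  rw [hsplit, wt2_split t _ _ (by omega)]
  have hck : 2 ^ t - k = 2 ^ t - 1 - (k - 1) := by omega
  rw [hck, wt2_compl t (k - 1) (by omega)]
  have := wt2_le t (k - 1) (by omega)
  omega

lemma two_pow_modeq (m : ℕ) : (2 : ℕ) ^ m ≡ 1 [MOD 2 ^ m - 1] :=
  ((Nat.modEq_iff_dvd' Nat.one_le_two_pow).mpr dvd_rfl).symm

lemma pow_mul_modeq (m j : ℕ) : (2 : ℕ) ^ (m * j) ≡ 1 [MOD 2 ^ m - 1] := by
  calc (2:ℕ) ^ (m * j) = (2 ^ m) ^ j := by rw [pow_mul]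
    _ ≡ 1 ^ j [MOD 2 ^ m - 1] := (two_pow_modeq m).pow j
    _ = 1 := one_pow j

lemma cancel_pow (m a b j : ℕ) (h : a * 2 ^ j ≡ b * 2 ^ j [MOD 2 ^ m - 1]) :
    a ≡ b [MOD 2 ^ m - 1] := by
  rcases Nat.eq_zero_or_pos m with hm | hm
  · subst hm
    simp only [pow_zero, Nat.sub_self] at *
    have : a * 2 ^ j = b * 2 ^ j := by
      unfold Nat.ModEq at h; simpa using h
    have : a = b := Nat.eq_of_mul_eq_mul_right (Nat.two_pow_pos j) this
    exact this ▸ Nat.ModEq.refl _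
  · have key : ∀ c : ℕ, c * 2 ^ (j * m) ≡ c [MOD 2 ^ m - 1] := fun c => by
      calc c * 2 ^ (j * m) ≡ c * 1 [MOD 2 ^ m - 1] := by
            rw [mul_comm j m]; exact (pow_mul_modeq m j).mul_left c
        _ = c := mul_one c
    have hjm : j * m = j + j * (m - 1) := by
      conv_lhs => rw [show m = 1 + (m - 1) by omega]
      ring
    calc a ≡ a * 2 ^ (j * m) [MOD 2 ^ m - 1] := (key a).symm
      _ = (a * 2 ^ j) * 2 ^ (j * (m - 1)) := by rw [hjm, pow_add]; ring
      _ ≡ (b * 2 ^ j) * 2 ^ (j * (m - 1)) [MOD 2 ^ m - 1] := h.mul_right _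
      _ = b * 2 ^ (j * m) := by rw [hjm, pow_add]; ring
      _ ≡ b [MOD 2 ^ m - 1] := key b

lemma m_mem_S (m i : ℕ) (hm : 1 ≤ m) :
    m ∈ {l : ℕ | 0 < l ∧ i * 2 ^ l % (2 ^ m - 1) = i % (2 ^ m - 1)} :=
  ⟨hm, ((two_pow_modeq m).mul_left i).trans (by rw [mul_one])⟩

lemma period (m i l : ℕ) (hl : i * 2 ^ l ≡ i [MOD 2 ^ m - 1]) (q : ℕ) :
    i * 2 ^ (l * q) ≡ i [MOD 2 ^ m - 1] := by
  induction q with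
  | zero => simp [Nat.ModEq.refl]
  | succ q ih =>
    calc i * 2 ^ (l * (q + 1)) = (i * 2 ^ l) * 2 ^ (l * q) := by
          rw [mul_add, mul_one, pow_add]; ring
      _ ≡ i * 2 ^ (l * q) [MOD 2 ^ m - 1] := hl.mul_right _
      _ ≡ i [MOD 2 ^ m - 1] := ih

lemma ell_pos (m i : ℕ) (hm : 1 ≤ m) : 0 < ell m i :=
  (Nat.sInf_mem (⟨m, m_mem_S m i hm⟩ : Set.Nonempty _)).1

lemma ell_spec (m i : ℕ) (hm : 1 ≤ m) : i * 2 ^ ell m i ≡ i [MOD 2 ^ m - 1] :=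
  (Nat.sInf_mem (⟨m, m_mem_S m i hm⟩ : Set.Nonempty _)).2

lemma mem_iff_dvd (m i : ℕ) (hm : 1 ≤ m) (l : ℕ) :
    i * 2 ^ l ≡ i [MOD 2 ^ m - 1] ↔ ell m i ∣ l := by
  constructor
  · intro hl
    set L := ell m i with hL
    have hd : L * (l / L) + l % L = l := Nat.div_add_mod l L
    have hrL : l % L < L := Nat.mod_lt _ (ell_pos m i hm)
    have h1 : i * 2 ^ l ≡ i * 2 ^ (l % L) [MOD 2 ^ m - 1] := by
      calc i * 2 ^ l = (i * 2 ^ (L * (l / L))) * 2 ^ (l % L) := by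
            rw [mul_assoc, ← pow_add, hd]
        _ ≡ i * 2 ^ (l % L) [MOD 2 ^ m - 1] :=
            (period m i L (ell_spec m i hm) _).mul_right _
    have h2 : i * 2 ^ (l % L) ≡ i [MOD 2 ^ m - 1] := h1.symm.trans hl
    rcases Nat.eq_zero_or_pos (l % L) with h0 | h0
    · exact Nat.dvd_of_mod_eq_zero h0
    · have : L ≤ l % L := Nat.sInf_le ⟨h0, h2⟩
      omega
  · rintro ⟨q, rfl⟩
    exact period m i _ (ell_spec m i hm) q

lemma ell_dvd_m (m i : ℕ) (hm : 1 ≤ m) : ell m i ∣ m :=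
  (mem_iff_dvd m i hm m).mp ((m_mem_S m i hm).2)

lemma f_eq_iff (m i : ℕ) (hm : 1 ≤ m) (j j' : ℕ) (hjj : j ≤ j') :
    i * 2 ^ j % (2 ^ m - 1) = i * 2 ^ j' % (2 ^ m - 1) ↔ ell m i ∣ (j' - j) := by
  rw [← mem_iff_dvd m i hm]
  constructor
  · intro h
    apply cancel_pow m _ _ j
    calc (i * 2 ^ (j' - j)) * 2 ^ j = i * 2 ^ j' := by
          rw [mul_assoc, ← pow_add]; congr 2; omega
      _ ≡ i * 2 ^ j [MOD 2 ^ m - 1] := h.symm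
  · intro h
    calc i * 2 ^ j ≡ (i * 2 ^ (j' - j)) * 2 ^ j [MOD 2 ^ m - 1] := (h.mul_right _).symm
      _ = i * 2 ^ j' := by rw [mul_assoc, ← pow_add]; congr 2; omega

lemma sum_mod_periodic (L : ℕ) (g : ℕ → ℕ) (hg : ∀ j, g j = g (j % L)) :
    ∀ t, ∑ j ∈ range (L * t), g j = t * ∑ j ∈ range L, g j := by
  intro t
  induction t with
  | zero => simp
  | succ t ih =>
    have h1 : L * (t + 1) = L * t + L := by ring
    rw [h1, Finset.sum_range_add, ih]
    have h2 : ∑ x ∈ range L, g (L * t + x) = ∑ x ∈ range L, g x := by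
      apply Finset.sum_congr rfl
      intro x hx
      rw [hg (L * t + x), Nat.mul_add_mod, ← hg x]
    rw [h2]; ring

lemma card_bits (m : ℕ) : ∀ i, i < 2 ^ m →
    ((range m).filter (fun b => i / 2 ^ b % 2 = 1)).card = wt2 i := by
  induction m with
  | zero =>
    intro i hi
    interval_cases i
    simp [wt2]
  | succ m ih =>
    intro i hi
    rw [Finset.card_filter, Finset.sum_range_succ']
    have h1 : ∀ b, (if i / 2 ^ (b + 1) % 2 = 1 then 1 else 0)
        = (if (i / 2) / 2 ^ b % 2 = 1 then (1:ℕ) else 0) := by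
      intro b
      rw [pow_succ, Nat.div_div_eq_div_mul, mul_comm (2^b) 2, ← Nat.div_div_eq_div_mul]
    simp only [h1]
    rw [← Finset.card_filter, ih (i / 2) (by omega), wt2_step' i]
    simp only [pow_zero, Nat.div_one]
    rcases Nat.mod_two_eq_zero_or_one i with h | h <;> simp [h] <;> omega

lemma parity_f (m i j : ℕ) (hi : i < 2 ^ m - 1) (hj1 : 1 ≤ j) (hjm : j < m) :
    (i * 2 ^ j % (2 ^ m - 1)) % 2 = i / 2 ^ (m - j) % 2 := by
  set A := 2 ^ j with hA
  set B := 2 ^ (m - j) with hB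
  have hAB : A * B = 2 ^ m := by rw [hA, hB, ← pow_add]; congr 1; omega
  have hApos : 0 < A := Nat.two_pow_pos _
  have hBpos : 0 < B := Nat.two_pow_pos _
  set q := i / B with hq
  set r := i % B with hr
  have hiqr : B * q + r = i := Nat.div_add_mod i B
  have hrB : r < B := Nat.mod_lt _ hBpos
  have hqA : q < A := by
    apply Nat.div_lt_of_lt_mul
    rw [mul_comm B A, hAB]; omega
  have hmod : i * 2 ^ j % (2 ^ m - 1) = q + r * A := by
    have h1 : i * A = q * 2 ^ m + r * A := by rw [← hiqr, ← hAB]; ring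
    have h2 : i * A ≡ q + r * A [MOD 2 ^ m - 1] := by
      rw [h1]
      exact Nat.ModEq.add_right _ (((two_pow_modeq m).mul_left q).trans (by rw [mul_one]))
    have h3 : q + r * A < 2 ^ m - 1 := by
      by_contra hcon
      push_neg at hcon
      have hr1 : r = B - 1 := by
        by_contra hne
        have h4 : (r + 2) * A ≤ B * A := Nat.mul_le_mul_right A (by omega)
        have h5 : (r + 2) * A = r * A + A + A := by ring
        have h6 : B * A = 2 ^ m := by rw [mul_comm]; exact hAB
        omega
      have hq1 : q = A - 1 := by
        have h4 : r * A + A = B * A := by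
          rw [hr1]
          have h7 : (B - 1) * A + A = ((B - 1) + 1) * A := by ring
          rw [h7]
          congr 2
          omega
        have h6 : B * A = 2 ^ m := by rw [mul_comm]; exact hAB
        omega
      have hieq : i = B * (A - 1) + (B - 1) := by rw [← hiqr, hq1, hr1]
      have hsub : B * (A - 1) + B = B * A := by
        have h6 : B * (A - 1) + B = B * ((A - 1) + 1) := by ring
        rw [h6]
        congr 1
        omega
      have h6 : B * A = 2 ^ m := by rw [mul_comm]; exact hAB
      omega
    calc i * 2 ^ j % (2 ^ m - 1) = (q + r * A) % (2 ^ m - 1) := h2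
      _ = q + r * A := Nat.mod_eq_of_lt h3
  rw [hmod]
  have hA2 : A = 2 ^ (j - 1) * 2 := by
    rw [hA, ← pow_succ]
    congr 1
    omega
  have h8 : q + r * A = q + (r * 2 ^ (j - 1)) * 2 := by rw [hA2]; ring
  rw [h8, Nat.add_mul_mod_self_right]

lemma odd_count (m i : ℕ) (hm : 1 ≤ m) (hi : i < 2 ^ m - 1) :
    ((range m).filter (fun j => (i * 2 ^ j % (2 ^ m - 1)) % 2 = 1)).card
      = ((range m).filter (fun b => i / 2 ^ b % 2 = 1)).card := by
  have hin : i % (2 ^ m - 1) = i := Nat.mod_eq_of_lt hi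
  apply Finset.card_nbij' (fun j => if j = 0 then 0 else m - j)
    (fun b => if b = 0 then 0 else m - b)
  · intro j hj
    rw [Finset.mem_coe, Finset.mem_filter, Finset.mem_range] at hj
    obtain ⟨hjm, hjp⟩ := hj
    rw [Finset.mem_coe, Finset.mem_filter, Finset.mem_range]
    beta_reduce
    split_ifs with h0
    · subst h0
      refine ⟨by omega, ?_⟩
      simp only [pow_zero, Nat.div_one]
      simpa [hin] using hjp
    · refine ⟨by omega, ?_⟩
      rw [← parity_f m i j hi (by omega) hjm]
      exact hjp
  · intro b hb
    rw [Finset.mem_coe, Finset.mem_filter, Finset.mem_range] at hb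
    obtain ⟨hbm, hbp⟩ := hb
    rw [Finset.mem_coe, Finset.mem_filter, Finset.mem_range]
    beta_reduce
    split_ifs with h0
    · subst h0
      refine ⟨by omega, ?_⟩
      simp only [pow_zero, Nat.div_one] at hbp
      simpa [hin] using hbp
    · refine ⟨by omega, ?_⟩
      have h1 := parity_f m i (m - b) hi (by omega) (by omega)
      rw [show m - (m - b) = b by omega] at h1
      rw [h1]
      exact hbp
  · intro j hj
    rw [Finset.mem_coe, Finset.mem_filter, Finset.mem_range] at hj
    rcases Nat.eq_zero_or_pos j with h0 | h0
    · subst h0; simp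
    · simp only [if_neg (show ¬ j = 0 by omega), if_neg (show ¬ (m - j) = 0 by omega)]
      omega
  · intro b hb
    rw [Finset.mem_coe, Finset.mem_filter, Finset.mem_range] at hb
    rcases Nat.eq_zero_or_pos b with h0 | h0
    · subst h0; simp
    · simp only [if_neg (show ¬ b = 0 by omega), if_neg (show ¬ (m - b) = 0 by omega)]
      omega

lemma vv_eq (m i : ℕ) (hm : 1 ≤ m) (hi : i < 2 ^ m - 1) :
    vv m i = (m - wt2 i) % 2 := by
  have hn1 : 1 ≤ 2 ^ m := Nat.one_le_two_pow
  set L := ell m i with hL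
  have hLpos : 0 < L := ell_pos m i hm
  have hLdvd : L ∣ m := ell_dvd_m m i hm
  set g : ℕ → ℕ := fun j => if (i * 2 ^ j % (2 ^ m - 1)) % 2 = 0 then 1 else 0 with hgdef
  have hfper : ∀ j : ℕ, i * 2 ^ (j % L) % (2 ^ m - 1) = i * 2 ^ j % (2 ^ m - 1) := by
    intro j
    have hd : L * (j / L) + j % L = j := Nat.div_add_mod j L
    refine (f_eq_iff m i hm (j % L) j (Nat.mod_le j L)).mpr ⟨j / L, ?_⟩
    rw [← hL]
    omega
  have hg : ∀ j, g j = g (j % L) := by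
    intro j
    simp only [hgdef, hfper j]
  have hsum_all : ∑ j ∈ range m, g j = (m / L) * ∑ j ∈ range L, g j := by
    conv_lhs => rw [show m = L * (m / L) from (Nat.mul_div_cancel' hLdvd).symm]
    exact sum_mod_periodic L g hg (m / L)
  have hinj0 : ∀ j ∈ range L, ∀ j' ∈ range L,
      i * 2 ^ j % (2 ^ m - 1) = i * 2 ^ j' % (2 ^ m - 1) → j = j' := by
    intro j hj j' hj' hff
    simp only [Finset.mem_range] at hj hj'
    rcases le_total j j' with hle | hle
    · rcases Nat.eq_zero_or_pos (j' - j) with h0 | h0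
      · omega
      · have := Nat.le_of_dvd h0 ((f_eq_iff m i hm j j' hle).mp hff)
        omega
    · rcases Nat.eq_zero_or_pos (j - j') with h0 | h0
      · omega
      · have := Nat.le_of_dvd h0 ((f_eq_iff m i hm j' j hle).mp hff.symm)
        omega
  have hrho : rho m i = ∑ j ∈ range L, g j := by
    unfold rho coset
    rw [Finset.filter_image]
    rw [Finset.card_image_of_injOn (fun a ha b hb hab =>
      hinj0 a (Finset.mem_of_mem_filter a ha) b (Finset.mem_of_mem_filter b hb) hab)]
    rw [Finset.card_filter]
  have hodd : ((range m).filter (fun j => ¬((i * 2 ^ j % (2 ^ m - 1)) % 2 = 0))).card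
      = wt2 i := by
    have he : (range m).filter (fun j => ¬((i * 2 ^ j % (2 ^ m - 1)) % 2 = 0))
        = (range m).filter (fun j => (i * 2 ^ j % (2 ^ m - 1)) % 2 = 1) := by
      apply Finset.filter_congr
      intro j hj
      constructor
      · intro h; omega
      · intro h; omega
    rw [he, odd_count m i hm hi, card_bits m i (by omega)]
  have hwt_le : wt2 i ≤ m := by
    rw [← hodd]
    calc ((range m).filter _).card ≤ (range m).card := Finset.card_filter_le _ _
      _ = m := Finset.card_range m
  have heven : ∑ j ∈ range m, g j = m - wt2 i := by
    rw [← Finset.card_filter]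
    have hsplit := Finset.card_filter_add_card_filter_not
      (s := range m) (p := fun j => (i * 2 ^ j % (2 ^ m - 1)) % 2 = 0)
    rw [Finset.card_range] at hsplit
    omega
  have hkey : (m / L) * rho m i = m - wt2 i := by
    rw [hrho, ← hsum_all]
    exact heven
  have hdiv : m * rho m i / L = (m / L) * rho m i := by
    rw [mul_comm m (rho m i), Nat.mul_div_assoc (rho m i) hLdvd, mul_comm]
  unfold vv
  rw [hdiv, hkey]

end Aux

theorem stmt6 (m : ℕ) (hm4 : m % 4 = 0) (hm : 4 ≤ m) (k : ℕ)
    (hk : (1 ≤ k ∧ k ≤ 2 ^ ((m - 2) / 2)) ∨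
      (2 ^ m - 2 ^ ((m - 2) / 2) - 1 ≤ k ∧ k ≤ 2 ^ m - 2)) :
    (2 ^ ((m + 2) / 2) - 1) * k % (2 ^ m - 1) ∈ Tset m 1 := by
  set s := m / 2 with hs
  have hm2 : m = 2 * s := by omega
  have hs2 : 2 ≤ s := by omega
  have hse : s % 2 = 0 := by omega
  have hp1 : (m + 2) / 2 = s + 1 := by omega
  have hp2 : (m - 2) / 2 = s - 1 := by omega
  rw [hp1]
  rw [hp2] at hk
  set a := 2 ^ (s + 1) - 1 with ha
  have hpow : 2 ^ (s + 1) * 2 ^ (s - 1) = 2 ^ m := by rw [← pow_add]; congr 1; omega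
  have hps1 : 2 ≤ 2 ^ (s - 1) := by
    calc (2:ℕ) = 2 ^ 1 := (pow_one 2).symm
      _ ≤ 2 ^ (s - 1) := Nat.pow_le_pow_right (by norm_num) (by omega)
  have hps2 : 2 ≤ 2 ^ (s + 1) := by
    calc (2:ℕ) = 2 ^ 1 := (pow_one 2).symm
      _ ≤ 2 ^ (s + 1) := Nat.pow_le_pow_right (by norm_num) (by omega)
  have ha1 : 1 ≤ a := by omega
  have hn16 : 16 ≤ 2 ^ m := by
    calc (16:ℕ) = 2 ^ 4 := by norm_num
      _ ≤ 2 ^ m := Nat.pow_le_pow_right (by norm_num) hm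
  have hbig : ∀ k', 1 ≤ k' → k' ≤ 2 ^ (s - 1) →
      a * k' < 2 ^ m - 1 ∧ wt2 (a * k') = s + 1 := by
    intro k' h1 h2
    have hb : a * k' ≤ a * 2 ^ (s - 1) := Nat.mul_le_mul_left a h2
    have he : a * 2 ^ (s - 1) + 2 ^ (s - 1) = 2 ^ m := by
      rw [ha]
      have h3 : (2 ^ (s+1) - 1) * 2 ^ (s-1) + 2 ^ (s-1)
          = ((2 ^ (s+1) - 1) + 1) * 2 ^ (s-1) := by ring
      rw [h3, show 2 ^ (s+1) - 1 + 1 = 2 ^ (s+1) by omega, hpow]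
    have hk2 : k' ≤ 2 ^ (s + 1) := by
      have : 2 ^ (s-1) ≤ 2 ^ (s+1) := Nat.pow_le_pow_right (by norm_num) (by omega)
      omega
    exact ⟨by omega, wt2_pred_pow_mul (s+1) k' h1 hk2⟩
  rcases hk with ⟨h1, h2⟩ | ⟨h1, h2⟩
  · obtain ⟨hlt, hwt⟩ := hbig k h1 h2
    have hmod : a * k % (2 ^ m - 1) = a * k := Nat.mod_eq_of_lt hlt
    unfold Tset
    rw [Finset.mem_filter, Finset.mem_range, hmod]
    refine ⟨hlt, ?_⟩
    rw [vv_eq m (a * k) (by omega) hlt, hwt]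
    omega
  · set k' := 2 ^ m - 1 - k with hk'
    have hk'1 : 1 ≤ k' := by omega
    have hk'2 : k' ≤ 2 ^ (s - 1) := by omega
    obtain ⟨hlt, hwt⟩ := hbig k' hk'1 hk'2
    have hAk1 : 1 ≤ a * k' := by
      calc 1 = 1 * 1 := by norm_num
        _ ≤ a * k' := Nat.mul_le_mul ha1 hk'1
    have hsum : a * k + a * k' = a * (2 ^ m - 1) := by
      rw [← mul_add]
      congr 1
      omega
    have hx1 : a * k = (2 ^ m - 1) * (a - 1) + ((2 ^ m - 1) - a * k') := by
      have e : (2 ^ m - 1) * (a - 1) + (2 ^ m - 1) = a * (2 ^ m - 1) := by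
        have e2 : (2 ^ m - 1) * (a - 1) + (2 ^ m - 1) = ((a - 1) + 1) * (2 ^ m - 1) := by ring
        rw [e2]
        congr 1
        omega
      omega
    have hxmod : a * k % (2 ^ m - 1) = (2 ^ m - 1) - a * k' := by
      rw [hx1, Nat.mul_add_mod]
      exact Nat.mod_eq_of_lt (by omega)
    unfold Tset
    rw [Finset.mem_filter, Finset.mem_range, hxmod]
    refine ⟨by omega, ?_⟩
    have hcw : wt2 ((2 ^ m - 1) - a * k') = m - (s + 1) := by
      have e3 : (2 ^ m - 1) - a * k' = 2 ^ m - 1 - (a * k') := rfl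
      rw [e3, wt2_compl m (a * k') (by omega), hwt]
    rw [vv_eq m _ (by omega) (by omega), hcw]
    omega
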